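/- Let λ₁ > 0, λ₂ > 0, α > 0 and θ ∈ [-1, 1], let D = λ₂α/(λ₁+λ₂α) + θλ₁·(2/(2λ₁+λ₂α) + 1/(λ₁+2λ₂α) - 2/(λ₁+λ₂α)), K = λ₁/D, and set p₁ = K/λ₁, p₂ = -K(1+θ)/(λ₁+λ₂α), p₃ = 2Kθ/(2λ₁+λ₂α), p₄ = Kθ/(λ₁+2λ₂α), p₅ = -Kθ/(λ₁+λ₂α). Then for every real t with t < λ₁ and every x₀ > 0, ∫₀^{x₀} e^{tx} · K e^{-λ₁x}(1 - e^{-λ₂αx})(1 - θe^{-λ₂αx}(1 - 2e^{-λ₁x})) dx = p₁λ₁(1-e^{-(λ₁-t)x₀})/(λ₁-t) + p₂(λ₁+λ₂α)(1-e^{-(λ₁+λ₂α-t)x₀})/(λ₁+λ₂α-t) + p₃(2λ₁+λ₂α)(1-e^{-(2λ₁+λ₂α-t)x₀})/(2λ₁+λ₂α-t) + p₄(λ₁+2λ₂α)(1-e^{-(λ₁+2λ₂α-t)x₀})/(λ₁+2λ₂α-t) + 2p₅(λ₁+λ₂α)(1-e^{-(2λ₁+2λ₂α-t)x₀})/(2λ₁+2λ₂α-t).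 -/

import Mathlib

open MeasureTheory Real

lemma gwed_exp_int (a x₀ : ℝ) (ha : a ≠ 0) :
    ∫ x in (0:ℝ)..x₀, Real.exp (-a * x) = (1 - Real.exp (-a * x₀)) / a := by
  rw [intervalIntegral.integral_comp_mul_left Real.exp (neg_ne_zero.mpr ha)]
  simp [integral_exp, mul_zero]
  field_simp
  linear_combination

theorem gwed_conditional_mgf
    (l₁ l₂ α θ : ℝ) (hl₁ : 0 < l₁) (hl₂ : 0 < l₂) (hα : 0 < α)
    (hθ : θ ∈ Set.Icc (-1 : ℝ) 1)
    (D K p₁ p₂ p₃ p₄ p₅ : ℝ)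
    (hD : D = l₂ * α / (l₁ + l₂ * α)
        + θ * l₁ * (2 / (2 * l₁ + l₂ * α) + 1 / (l₁ + 2 * l₂ * α)
          - 2 / (l₁ + l₂ * α)))
    (hK : K = l₁ / D)
    (hp₁ : p₁ = K / l₁)
    (hp₂ : p₂ = -(K * (1 + θ)) / (l₁ + l₂ * α))
    (hp₃ : p₃ = 2 * K * θ / (2 * l₁ + l₂ * α))
    (hp₄ : p₄ = K * θ / (l₁ + 2 * l₂ * α))
    (hp₅ : p₅ = -(K * θ) / (l₁ + l₂ * α)) :
    ∀ t : ℝ, t < l₁ → ∀ x₀ : ℝ, 0 < x₀ →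
      (∫ x in (0 : ℝ)..x₀,
          Real.exp (t * x) * (K * Real.exp (-l₁ * x) * (1 - Real.exp (-l₂ * α * x))
            * (1 - θ * Real.exp (-l₂ * α * x) * (1 - 2 * Real.exp (-l₁ * x)))))
        = p₁ * l₁ * (1 - Real.exp (-(l₁ - t) * x₀)) / (l₁ - t)
          + p₂ * (l₁ + l₂ * α) * (1 - Real.exp (-(l₁ + l₂ * α - t) * x₀))
              / (l₁ + l₂ * α - t)
          + p₃ * (2 * l₁ + l₂ * α) * (1 - Real.exp (-(2 * l₁ + l₂ * α - t) * x₀))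
              / (2 * l₁ + l₂ * α - t)
          + p₄ * (l₁ + 2 * l₂ * α) * (1 - Real.exp (-(l₁ + 2 * l₂ * α - t) * x₀))
              / (l₁ + 2 * l₂ * α - t)
          + 2 * p₅ * (l₁ + l₂ * α) * (1 - Real.exp (-(2 * l₁ + 2 * l₂ * α - t) * x₀))
              / (2 * l₁ + 2 * l₂ * α - t) := by
  intro t ht x₀ hx₀
  have hla : 0 < l₂ * α := mul_pos hl₂ hα
  have ha1 : (0:ℝ) < l₁ - t := by linarith
  have ha2 : (0:ℝ) < l₁ + l₂ * α - t := by linarith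
  have ha3 : (0:ℝ) < 2 * l₁ + l₂ * α - t := by linarith
  have ha4 : (0:ℝ) < l₁ + 2 * l₂ * α - t := by linarith
  have ha5 : (0:ℝ) < 2 * l₁ + 2 * l₂ * α - t := by linarith
  -- rewrite the integrand as a linear combination of exponentials
  have key : ∀ x : ℝ,
      Real.exp (t * x) * (K * Real.exp (-l₁ * x) * (1 - Real.exp (-l₂ * α * x))
        * (1 - θ * Real.exp (-l₂ * α * x) * (1 - 2 * Real.exp (-l₁ * x))))
      = K * Real.exp (-(l₁ - t) * x)
        + (-(K * (1 + θ))) * Real.exp (-(l₁ + l₂ * α - t) * x)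
        + (2 * K * θ) * Real.exp (-(2 * l₁ + l₂ * α - t) * x)
        + (K * θ) * Real.exp (-(l₁ + 2 * l₂ * α - t) * x)
        + (-(2 * K * θ)) * Real.exp (-(2 * l₁ + 2 * l₂ * α - t) * x) := by
    intro x
    have e1 : Real.exp (-(l₁ - t) * x) = Real.exp (t * x) * Real.exp (-l₁ * x) := by
      rw [← Real.exp_add]; ring_nf
    have e2 : Real.exp (-(l₁ + l₂ * α - t) * x)
        = Real.exp (t * x) * Real.exp (-l₁ * x) * Real.exp (-l₂ * α * x) := by
      rw [← Real.exp_add, ← Real.exp_add]; ring_nf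
    have e3 : Real.exp (-(2 * l₁ + l₂ * α - t) * x)
        = Real.exp (t * x) * Real.exp (-l₁ * x) * Real.exp (-l₁ * x)
          * Real.exp (-l₂ * α * x) := by
      rw [← Real.exp_add, ← Real.exp_add, ← Real.exp_add]; ring_nf
    have e4 : Real.exp (-(l₁ + 2 * l₂ * α - t) * x)
        = Real.exp (t * x) * Real.exp (-l₁ * x) * Real.exp (-l₂ * α * x)
          * Real.exp (-l₂ * α * x) := by
      rw [← Real.exp_add, ← Real.exp_add, ← Real.exp_add]; ring_nf
    have e5 : Real.exp (-(2 * l₁ + 2 * l₂ * α - t) * x)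
        = Real.exp (t * x) * Real.exp (-l₁ * x) * Real.exp (-l₁ * x)
          * Real.exp (-l₂ * α * x) * Real.exp (-l₂ * α * x) := by
      rw [← Real.exp_add, ← Real.exp_add, ← Real.exp_add, ← Real.exp_add]; ring_nf
    rw [e1, e2, e3, e4, e5]; ring
  have hint : ∀ c a : ℝ, IntervalIntegrable (fun x => c * Real.exp (-a * x))
      MeasureTheory.volume 0 x₀ := by
    intro c a
    exact (Continuous.intervalIntegrable (by continuity) 0 x₀)
  rw [intervalIntegral.integral_congr (g := fun x =>
        K * Real.exp (-(l₁ - t) * x)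
        + (-(K * (1 + θ))) * Real.exp (-(l₁ + l₂ * α - t) * x)
        + (2 * K * θ) * Real.exp (-(2 * l₁ + l₂ * α - t) * x)
        + (K * θ) * Real.exp (-(l₁ + 2 * l₂ * α - t) * x)
        + (-(2 * K * θ)) * Real.exp (-(2 * l₁ + 2 * l₂ * α - t) * x))
      (fun x _ => key x)]
  rw [intervalIntegral.integral_add ((((hint _ _).add (hint _ _)).add (hint _ _)).add (hint _ _)) (hint _ _),
      intervalIntegral.integral_add (((hint _ _).add (hint _ _)).add (hint _ _)) (hint _ _),
      intervalIntegral.integral_add ((hint _ _).add (hint _ _)) (hint _ _),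
      intervalIntegral.integral_add (hint _ _) (hint _ _)]
  rw [intervalIntegral.integral_const_mul, intervalIntegral.integral_const_mul,
      intervalIntegral.integral_const_mul, intervalIntegral.integral_const_mul,
      intervalIntegral.integral_const_mul]
  rw [gwed_exp_int _ _ ha1.ne', gwed_exp_int _ _ ha2.ne', gwed_exp_int _ _ ha3.ne',
      gwed_exp_int _ _ ha4.ne', gwed_exp_int _ _ ha5.ne']
  subst hp₁ hp₂ hp₃ hp₄ hp₅
  have h1 : l₁ ≠ 0 := hl₁.ne'
  have h2 : l₁ + l₂ * α ≠ 0 := by positivity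
  have h3 : 2 * l₁ + l₂ * α ≠ 0 := by positivity
  have h4 : l₁ + 2 * l₂ * α ≠ 0 := by positivity
  field_simp
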